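/- For all positive integers k and m (no restriction relating m and k), every polynomial P ∈ 𝒫 can be written as a finite sum P = Σ_n r^{2n} H_n over families n = (n_ij)_{1 ≤ i ≤ j ≤ k} of nonnegative integers, with each H_n a spherical harmonic; i.e. 𝒫 = Σ_n r^{2n} ℋ (Lemma 1(ii); the sum need not be direct in general). -/

import Mathlib

open MvPolynomial

/-- The mixed Laplacian `Δ_ij = Σ_s ∂_{x^i_s} ∂_{x^j_s}` on polynomials in `k` vector
variables of `ℝ^m`. -/
noncomputable def mixedLap (k m : ℕ) (i j : Fin k)
    (P : MvPolynomial (Fin k × Fin m) ℂ) : MvPolynomial (Fin k × Fin m) ℂ :=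
  ∑ s : Fin m, pderiv (i, s) (pderiv (j, s) P)

/-- The polynomial `r²_ij = Σ_s x^i_s x^j_s`. -/
noncomputable def r2 (k m : ℕ) (i j : Fin k) : MvPolynomial (Fin k × Fin m) ℂ :=
  ∑ s : Fin m, X (i, s) * X (j, s)

/-- `H` is a spherical harmonic if `Δ_ij H = 0` for all `i ≤ j`. -/
def IsSphericalHarmonic (k m : ℕ) (H : MvPolynomial (Fin k × Fin m) ℂ) : Prop :=
  ∀ i j : Fin k, i ≤ j → mixedLap k m i j H = 0

/-- For a family `n = (n_ij)_{i ≤ j}` of nonnegative integers, the polynomial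
`r^{2n} = ∏_{i ≤ j} (r²_ij)^{n_ij}`. -/
noncomputable def r2pow (k m : ℕ) (n : {p : Fin k × Fin k // p.1 ≤ p.2} → ℕ) :
    MvPolynomial (Fin k × Fin m) ℂ :=
  ∏ p : {p : Fin k × Fin k // p.1 ≤ p.2}, (r2 k m p.1.1 p.1.2) ^ (n p)

set_option linter.unusedSectionVars false
set_option linter.unusedVariables false
namespace FischerAux

variable {σ : Type*} [DecidableEq σ]

theorem coeff_pderiv (v : σ) (q : MvPolynomial σ ℂ) (β : σ →₀ ℕ) :
    coeff β (pderiv v q) = ((β v + 1 : ℕ) : ℂ) * coeff (β + Finsupp.single v 1) q := by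
  induction q using MvPolynomial.induction_on' with
  | add p q hp hq => simp [hp, hq, mul_add]
  | monomial α c =>
    rw [pderiv_monomial, coeff_monomial, coeff_monomial]
    by_cases h : α = β + Finsupp.single v 1
    · subst h
      have h1 : β + Finsupp.single v 1 - Finsupp.single v 1 = β := by
        ext s; simp
      have h2 : (β + Finsupp.single v 1 : σ →₀ ℕ) v = β v + 1 := by
        simp
      rw [if_pos h1, if_pos rfl, h2]
      push_cast
      ring
    · rw [if_neg h]
      by_cases hv : α v = 0
      · rw [hv]
        simp
      · have : ¬ (α - Finsupp.single v 1 = β) := by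
          intro hc
          apply h
          ext s
          have := DFunLike.congr_fun hc s
          simp only [Finsupp.coe_tsub, Pi.sub_apply] at this
          by_cases hs : s = v
          · subst hs
            simp only [Finsupp.single_eq_same] at this ⊢
            simp [Finsupp.add_apply]
            omega
          · simp only [Finsupp.single_eq_of_ne' (Ne.symm hs)] at this ⊢
            simp [Finsupp.add_apply, Finsupp.single_eq_of_ne' (Ne.symm hs)]
            omega
        rw [if_neg this, mul_zero]

theorem pderiv_pderiv_comm (u v : σ) (q : MvPolynomial σ ℂ) :
    pderiv u (pderiv v q) = pderiv v (pderiv u q) := by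
  apply MvPolynomial.ext
  intro β
  rw [coeff_pderiv, coeff_pderiv, coeff_pderiv, coeff_pderiv]
  have h1 : β + Finsupp.single u 1 + Finsupp.single v 1
      = β + Finsupp.single v 1 + Finsupp.single u 1 := by
    rw [add_right_comm]
  rw [h1]
  ring_nf
  by_cases h : u = v
  · subst h; ring
  · simp [Finsupp.add_apply, Finsupp.single_eq_of_ne h, Finsupp.single_eq_of_ne (Ne.symm h)]
    ring


variable [Fintype σ]

/-- Fischer weights. -/
def w (α : σ →₀ ℕ) : ℕ := ∏ s : σ, (α s).factorial

theorem w_pos (α : σ →₀ ℕ) : 0 < w α :=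
  Finset.prod_pos fun s _ => Nat.factorial_pos _

theorem w_add_single (v : σ) (β : σ →₀ ℕ) :
    w (β + Finsupp.single v 1) = (β v + 1) * w β := by
  unfold w
  rw [← Finset.mul_prod_erase Finset.univ _ (Finset.mem_univ v),
      ← Finset.mul_prod_erase Finset.univ (fun s => (β s).factorial) (Finset.mem_univ v)]
  have h1 : (β + Finsupp.single v 1 : σ →₀ ℕ) v = β v + 1 := by simp
  have h2 : ∀ s ∈ Finset.univ.erase v,
      ((β + Finsupp.single v 1 : σ →₀ ℕ) s).factorial = (β s).factorial := by
    intro s hs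
    have : s ≠ v := (Finset.mem_erase.mp hs).1
    simp [Finsupp.add_apply, Finsupp.single_eq_of_ne' (Ne.symm this)]
  rw [Finset.prod_congr rfl h2, h1, Nat.factorial_succ]
  ring

/-- The Fischer bilinear form. -/
noncomputable def Bf (p q : MvPolynomial σ ℂ) : ℂ :=
  ∑ α ∈ p.support, (w α : ℂ) * coeff α p * coeff α q

theorem Bf_eq_sum_union (p q : MvPolynomial σ ℂ) :
    Bf p q = ∑ α ∈ p.support ∪ q.support, (w α : ℂ) * coeff α p * coeff α q := by
  apply Finset.sum_subset Finset.subset_union_left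
  intro α _ hα
  rw [MvPolynomial.notMem_support_iff.mp hα]
  ring

theorem Bf_comm (p q : MvPolynomial σ ℂ) : Bf p q = Bf q p := by
  rw [Bf_eq_sum_union, Bf_eq_sum_union, Finset.union_comm]
  exact Finset.sum_congr rfl fun α _ => by ring

theorem Bf_add_right (p q q' : MvPolynomial σ ℂ) :
    Bf p (q + q') = Bf p q + Bf p q' := by
  unfold Bf
  rw [← Finset.sum_add_distrib]
  exact Finset.sum_congr rfl fun α _ => by rw [coeff_add]; ring

theorem Bf_smul_right (c : ℂ) (p q : MvPolynomial σ ℂ) :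
    Bf p (c • q) = c * Bf p q := by
  unfold Bf
  rw [Finset.mul_sum]
  exact Finset.sum_congr rfl fun α _ => by
    rw [MvPolynomial.coeff_smul]; simp; ring

theorem Bf_add_left (p p' q : MvPolynomial σ ℂ) :
    Bf (p + p') q = Bf p q + Bf p' q := by
  rw [Bf_comm, Bf_add_right, Bf_comm q p, Bf_comm q p']

theorem Bf_smul_left (c : ℂ) (p q : MvPolynomial σ ℂ) :
    Bf (c • p) q = c * Bf p q := by
  rw [Bf_comm, Bf_smul_right, Bf_comm]

theorem Bf_zero_right (p : MvPolynomial σ ℂ) : Bf p 0 = 0 := by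
  unfold Bf; simp

theorem Bf_zero_left (q : MvPolynomial σ ℂ) : Bf 0 q = 0 := by
  rw [Bf_comm]; exact Bf_zero_right q

theorem Bf_sum_right {ι : Type*} (p : MvPolynomial σ ℂ) (t : Finset ι)
    (f : ι → MvPolynomial σ ℂ) :
    Bf p (∑ i ∈ t, f i) = ∑ i ∈ t, Bf p (f i) := by
  classical
  induction t using Finset.induction_on with
  | empty => simp [Bf_zero_right]
  | insert _ _ h ih => rw [Finset.sum_insert h, Finset.sum_insert h, Bf_add_right, ih]

theorem Bf_sum_left {ι : Type*} (q : MvPolynomial σ ℂ) (t : Finset ι)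
    (f : ι → MvPolynomial σ ℂ) :
    Bf (∑ i ∈ t, f i) q = ∑ i ∈ t, Bf (f i) q := by
  rw [Bf_comm, Bf_sum_right]
  exact Finset.sum_congr rfl fun i _ => Bf_comm _ _

theorem Bf_monomial_left (γ : σ →₀ ℕ) (c : ℂ) (q : MvPolynomial σ ℂ) :
    Bf (monomial γ c) q = (w γ : ℂ) * c * coeff γ q := by
  by_cases hc : c = 0
  · subst hc; simp [Bf_zero_left]
  · unfold Bf
    rw [support_monomial, if_neg hc, Finset.sum_singleton, coeff_monomial, if_pos rfl]

theorem Bf_X_mul (v : σ) (p q : MvPolynomial σ ℂ) :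
    Bf (X v * p) q = Bf p (pderiv v q) := by
  induction p using MvPolynomial.induction_on' with
  | add p p' hp hp' => rw [mul_add, Bf_add_left, Bf_add_left, hp, hp']
  | monomial β c =>
    have hX : (X v : MvPolynomial σ ℂ) * monomial β c = monomial (β + Finsupp.single v 1) c := by
      rw [X, monomial_mul, one_mul, add_comm]
    rw [hX, Bf_monomial_left, Bf_monomial_left, coeff_pderiv, w_add_single]
    push_cast
    ring

theorem Bf_conj_self (z : MvPolynomial σ ℂ) (h : Bf (map (starRingEnd ℂ) z) z = 0) :
    z = 0 := by
  rw [Bf_comm] at h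
  by_contra hz
  obtain ⟨α₀, hα₀⟩ := Finset.nonempty_of_ne_empty (mt MvPolynomial.support_eq_empty.mp hz)
  have hre : (Bf z (map (starRingEnd ℂ) z)).re
      = ∑ α ∈ z.support, (w α : ℝ) * Complex.normSq (coeff α z) := by
    unfold Bf
    rw [Complex.re_sum]
    refine Finset.sum_congr rfl fun α _ => ?_
    rw [MvPolynomial.coeff_map]
    rw [mul_assoc, Complex.mul_conj]
    simp [Complex.ofReal_mul]
  rw [h] at hre
  have hzero : ∀ α ∈ z.support, (w α : ℝ) * Complex.normSq (coeff α z) = 0 := by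
    intro α hα
    have := (Finset.sum_eq_zero_iff_of_nonneg fun α _ =>
      mul_nonneg (by positivity) (Complex.normSq_nonneg _)).mp hre.symm
    exact this α hα
  have := hzero α₀ hα₀
  have hw : (w α₀ : ℝ) ≠ 0 := by exact_mod_cast (w_pos α₀).ne'
  have : Complex.normSq (coeff α₀ z) = 0 := by
    rcases mul_eq_zero.mp this with h' | h'
    · exact absurd h' hw
    · exact h'
  exact MvPolynomial.mem_support_iff.mp hα₀ (Complex.normSq_eq_zero.mp this)


theorem totalDegree_pderiv_le (v : σ) (q : MvPolynomial σ ℂ) (e : ℕ)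
    (h : q.totalDegree ≤ e + 1) : (pderiv v q).totalDegree ≤ e := by
  apply Finset.sup_le
  intro α hα
  have hc : coeff α (pderiv v q) ≠ 0 := MvPolynomial.mem_support_iff.mp hα
  rw [coeff_pderiv] at hc
  have hc2 : coeff (α + Finsupp.single v 1) q ≠ 0 := by
    intro h0; rw [h0, mul_zero] at hc; exact hc rfl
  have hmem := MvPolynomial.mem_support_iff.mpr hc2
  have hle := MvPolynomial.le_totalDegree hmem
  have hsum : ((α + Finsupp.single v 1 : σ →₀ ℕ).sum fun _ e => e)
      = (α.sum fun _ e => e) + 1 := by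
    rw [Finsupp.sum_add_index' (fun _ => rfl) (fun _ _ _ => rfl)]
    simp
  omega

/-- Key linear algebra lemma: if the only vector `Bf`-orthogonal to a subspace `W`
of a finite-dimensional space is `0`, then `W` is everything. -/
theorem key_linalg {V : Type*} [AddCommGroup V] [Module ℂ V] [FiniteDimensional ℂ V]
    (B : V →ₗ[ℂ] V →ₗ[ℂ] ℂ) (W : Submodule ℂ V)
    (h : ∀ y : V, (∀ x ∈ W, B x y = 0) → y = 0) : W = ⊤ := by
  let φ : V →ₗ[ℂ] Module.Dual ℂ W := (B.domRestrict W).flip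
  have hinj : Function.Injective φ := by
    rw [← LinearMap.ker_eq_bot]
    rw [Submodule.eq_bot_iff]
    intro y hy
    apply h
    intro x hx
    have : φ y ⟨x, hx⟩ = 0 := by rw [LinearMap.mem_ker.mp hy]; rfl
    exact this
  have h1 : Module.finrank ℂ V ≤ Module.finrank ℂ (Module.Dual ℂ W) :=
    LinearMap.finrank_le_finrank_of_injective hinj
  rw [Subspace.dual_finrank_eq] at h1
  exact Submodule.eq_top_of_finrank_eq (le_antisymm (Submodule.finrank_le W) h1)

end FischerAux


namespace FischerAux

variable {k m : ℕ}

/-- Index type for the pairs `i ≤ j`. -/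
abbrev Pairs (k : ℕ) := {p : Fin k × Fin k // p.1 ≤ p.2}

/-- The mixed Laplacian as a linear map. -/
noncomputable def lapLM (k m : ℕ) (i j : Fin k) :
    MvPolynomial (Fin k × Fin m) ℂ →ₗ[ℂ] MvPolynomial (Fin k × Fin m) ℂ :=
  ∑ s : Fin m, ((pderiv (i, s) : Derivation ℂ _ _).toLinearMap ∘ₗ
    (pderiv (j, s) : Derivation ℂ _ _).toLinearMap)

theorem lapLM_apply (i j : Fin k) (P : MvPolynomial (Fin k × Fin m) ℂ) :
    lapLM k m i j P = mixedLap k m i j P := by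
  simp [lapLM, mixedLap, LinearMap.sum_apply, LinearMap.comp_apply]

theorem Bf_r2_mul (i j : Fin k) (p y : MvPolynomial (Fin k × Fin m) ℂ) :
    Bf (r2 k m i j * p) y = Bf p (lapLM k m i j y) := by
  rw [r2, Finset.sum_mul, Bf_sum_left]
  have h : ∀ s : Fin m, Bf (X (i, s) * X (j, s) * p) y
      = Bf p (pderiv (i, s) (pderiv (j, s) y)) := by
    intro s
    rw [mul_assoc, Bf_X_mul, Bf_X_mul, pderiv_pderiv_comm]
  rw [Finset.sum_congr rfl fun s _ => h s, ← Bf_sum_right]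
  congr 1
  simp [lapLM, LinearMap.sum_apply, LinearMap.comp_apply]

theorem totalDegree_r2_mul_le (i j : Fin k) (r : MvPolynomial (Fin k × Fin m) ℂ) :
    (r2 k m i j * r).totalDegree ≤ 2 + r.totalDegree := by
  refine (totalDegree_mul _ _).trans (Nat.add_le_add_right ?_ _)
  refine (totalDegree_finset_sum _ _).trans (Finset.sup_le fun s _ => ?_)
  refine (totalDegree_mul _ _).trans ?_
  simp [totalDegree_X]

theorem totalDegree_lapLM_le (i j : Fin k) (y : MvPolynomial (Fin k × Fin m) ℂ) (e : ℕ)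
    (h : y.totalDegree ≤ e + 2) : (lapLM k m i j y).totalDegree ≤ e := by
  have h2 : lapLM k m i j y = ∑ s : Fin m, pderiv (i, s) (pderiv (j, s) y) := by
    simp [lapLM, LinearMap.sum_apply, LinearMap.comp_apply]
  rw [h2]
  refine (totalDegree_finset_sum _ _).trans (Finset.sup_le fun s _ => ?_)
  exact totalDegree_pderiv_le _ _ _ (totalDegree_pderiv_le _ _ _ h)

/-- Coefficientwise conjugation. -/
noncomputable def Cc (p : MvPolynomial (Fin k × Fin m) ℂ) : MvPolynomial (Fin k × Fin m) ℂ :=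
  map (starRingEnd ℂ) p

theorem totalDegree_Cc_le (p : MvPolynomial (Fin k × Fin m) ℂ) :
    (Cc p).totalDegree ≤ p.totalDegree :=
  Finset.sup_le fun α hα => le_totalDegree (support_map_subset _ _ hα)

theorem lapLM_Cc (i j : Fin k) (y : MvPolynomial (Fin k × Fin m) ℂ) :
    lapLM k m i j (Cc y) = Cc (lapLM k m i j y) := by
  have h : ∀ z, lapLM k m i j z = ∑ s : Fin m, pderiv (i, s) (pderiv (j, s) z) := by
    intro z; simp [lapLM, LinearMap.sum_apply, LinearMap.comp_apply]
  rw [h (Cc y), h y]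
  simp only [Cc, map_sum]
  exact Finset.sum_congr rfl fun s _ => by rw [pderiv_map, pderiv_map]

theorem pderiv_eq_zero_of_totalDegree_eq_zero (v : Fin k × Fin m)
    (q : MvPolynomial (Fin k × Fin m) ℂ) (h : q.totalDegree = 0) : pderiv v q = 0 := by
  apply MvPolynomial.ext
  intro β
  rw [coeff_pderiv, coeff_zero]
  have hc : coeff (β + Finsupp.single v 1) q = 0 := by
    apply coeff_eq_zero_of_totalDegree_lt
    rw [h]
    have hv : (β + Finsupp.single v 1 : _ →₀ ℕ) v ≠ 0 := by simp
    have hmem : v ∈ (β + Finsupp.single v 1 : _ →₀ ℕ).support := Finsupp.mem_support_iff.mpr hv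
    have h3 : (β + Finsupp.single v 1 : _ →₀ ℕ) v
        ≤ ∑ i ∈ (β + Finsupp.single v 1 : _ →₀ ℕ).support,
          (β + Finsupp.single v 1 : _ →₀ ℕ) i :=
      Finset.single_le_sum (fun i _ => Nat.zero_le _) hmem
    have h4 : 0 < (β + Finsupp.single v 1 : _ →₀ ℕ) v := by simp
    exact lt_of_lt_of_le h4 h3
  rw [hc, mul_zero]

/-- The submodule of spherical harmonics. -/
noncomputable def HarmSub (k m : ℕ) : Submodule ℂ (MvPolynomial (Fin k × Fin m) ℂ) :=
  ⨅ p : Pairs k, LinearMap.ker (lapLM k m p.1.1 p.1.2)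

theorem mem_HarmSub {H : MvPolynomial (Fin k × Fin m) ℂ} :
    H ∈ HarmSub k m ↔ ∀ i j : Fin k, i ≤ j → lapLM k m i j H = 0 := by
  rw [HarmSub, Submodule.mem_iInf]
  constructor
  · intro h i j hij
    exact h ⟨(i, j), hij⟩
  · intro h p
    exact h p.1.1 p.1.2 p.2

/-- The generating set of the Fischer decomposition. -/
def Sgen (k m : ℕ) : Set (MvPolynomial (Fin k × Fin m) ℂ) :=
  {q | ∃ (n : Pairs k → ℕ) (H : MvPolynomial (Fin k × Fin m) ℂ),
    H ∈ HarmSub k m ∧ q = r2pow k m n * H}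

theorem r2_mul_mem_span (p : Pairs k) (x : MvPolynomial (Fin k × Fin m) ℂ)
    (hx : x ∈ Submodule.span ℂ (Sgen k m)) :
    r2 k m p.1.1 p.1.2 * x ∈ Submodule.span ℂ (Sgen k m) := by
  classical
  induction hx using Submodule.span_induction with
  | mem q hq =>
    obtain ⟨n, H, hH, rfl⟩ := hq
    apply Submodule.subset_span
    refine ⟨Function.update n p (n p + 1), H, hH, ?_⟩
    have hprod : r2pow k m (Function.update n p (n p + 1))
        = r2pow k m n * r2 k m p.1.1 p.1.2 := by
      rw [r2pow, r2pow]
      have h1 : ∀ q : Pairs k,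
          r2 k m q.1.1 q.1.2 ^ Function.update n p (n p + 1) q
            = r2 k m q.1.1 q.1.2 ^ n q * (if q = p then r2 k m q.1.1 q.1.2 else 1) := by
        intro q
        by_cases hq : q = p
        · subst hq
          rw [Function.update_self, pow_succ, if_pos rfl]
        · rw [Function.update_of_ne hq, if_neg hq, mul_one]
      rw [Finset.prod_congr rfl fun q _ => h1 q, Finset.prod_mul_distrib,
        Finset.prod_ite_eq' Finset.univ p (fun q => r2 k m q.1.1 q.1.2),
        if_pos (Finset.mem_univ p)]
    rw [hprod]
    ring
  | zero => rw [mul_zero]; exact Submodule.zero_mem _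
  | add a b _ _ ha hb => rw [mul_add]; exact Submodule.add_mem _ ha hb
  | smul c a _ ha => rw [mul_smul_comm]; exact Submodule.smul_mem _ _ ha

theorem mem_span_Sgen (k m : ℕ) (d : ℕ) :
    ∀ P : MvPolynomial (Fin k × Fin m) ℂ, P.totalDegree ≤ d →
      P ∈ Submodule.span ℂ (Sgen k m) := by
  induction d using Nat.strong_induction_on with
  | _ d IH =>
  intro P hP
  by_cases hd : d ≤ 1
  · -- low degree: P is itself harmonic
    apply Submodule.subset_span
    refine ⟨0, P, ?_, ?_⟩
    · rw [mem_HarmSub]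
      intro i j hij
      have h : ∀ s : Fin m, pderiv ((i, s) : Fin k × Fin m) (pderiv (j, s) P) = 0 := by
        intro s
        have h1 : (pderiv ((j, s) : Fin k × Fin m) P).totalDegree = 0 := by
          have := totalDegree_pderiv_le ((j, s) : Fin k × Fin m) P 0 (by omega)
          omega
        exact pderiv_eq_zero_of_totalDegree_eq_zero _ _ h1
      simp [lapLM, LinearMap.sum_apply, LinearMap.comp_apply, h]
    · have h1 : r2pow k m 0 = 1 := by simp [r2pow]
      rw [h1, one_mul]
  · -- main case
    push_neg at hd
    classical
    have hUle : HarmSub k m ⊔ Submodule.span ℂ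
        {q | ∃ (p : Pairs k) (r : MvPolynomial (Fin k × Fin m) ℂ),
          r.totalDegree ≤ d - 2 ∧ q = r2 k m p.1.1 p.1.2 * r}
        ≤ Submodule.span ℂ (Sgen k m) := by
      apply sup_le
      · intro H hH
        apply Submodule.subset_span
        refine ⟨0, H, hH, ?_⟩
        have h1 : r2pow k m 0 = 1 := by simp [r2pow]
        rw [h1, one_mul]
      · rw [Submodule.span_le]
        rintro q ⟨p, r, hr, rfl⟩
        exact r2_mul_mem_span p r (IH (d - 2) (by omega) r hr)
    apply hUle
    set U : Submodule ℂ (MvPolynomial (Fin k × Fin m) ℂ) := HarmSub k m ⊔ Submodule.span ℂ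
        {q | ∃ (p : Pairs k) (r : MvPolynomial (Fin k × Fin m) ℂ),
          r.totalDegree ≤ d - 2 ∧ q = r2 k m p.1.1 p.1.2 * r} with hU
    set V : Submodule ℂ (MvPolynomial (Fin k × Fin m) ℂ) :=
      restrictTotalDegree (Fin k × Fin m) ℂ d with hV
    have hPV : P ∈ V := by
      show P ∈ restrictTotalDegree (Fin k × Fin m) ℂ d
      rw [mem_restrictTotalDegree]; exact hP
    suffices hkey : U.comap V.subtype = ⊤ by
      have h2 : (⟨P, hPV⟩ : V) ∈ U.comap V.subtype := by rw [hkey]; trivial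
      exact Submodule.mem_comap.mp h2
    apply key_linalg (LinearMap.mk₂ ℂ (fun x y : V => Bf x.1 y.1)
      (fun x x' y => Bf_add_left _ _ _) (fun c x y => Bf_smul_left _ _ _)
      (fun x y y' => Bf_add_right _ _ _) (fun c x y => Bf_smul_right _ _ _))
    intro y hy
    have hy' : ∀ q : MvPolynomial (Fin k × Fin m) ℂ, q ∈ U → q.totalDegree ≤ d →
        Bf q y.1 = 0 := by
      intro q hq hdeg
      have hqV : q ∈ V := by
        show q ∈ restrictTotalDegree (Fin k × Fin m) ℂ d
        rw [mem_restrictTotalDegree]; exact hdeg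
      have := hy ⟨q, hqV⟩ (Submodule.mem_comap.mpr hq)
      simpa using this
    have hydeg : (y.1 : MvPolynomial (Fin k × Fin m) ℂ).totalDegree ≤ d := by
      have h0 : y.1 ∈ restrictTotalDegree (Fin k × Fin m) ℂ d := y.2
      rw [mem_restrictTotalDegree] at h0
      exact h0
    have hlap : ∀ i j : Fin k, i ≤ j → lapLM k m i j y.1 = 0 := by
      intro i j hij
      have hzdeg : (lapLM k m i j y.1).totalDegree ≤ d - 2 :=
        totalDegree_lapLM_le i j y.1 (d - 2) (le_trans hydeg (by omega))
      have hCdeg : (Cc (lapLM k m i j y.1)).totalDegree ≤ d - 2 :=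
        le_trans (totalDegree_Cc_le _) hzdeg
      apply Bf_conj_self
      have h1 : Bf (r2 k m i j * Cc (lapLM k m i j y.1)) y.1 = 0 := by
        apply hy'
        · apply Submodule.mem_sup_right
          exact Submodule.subset_span ⟨⟨(i, j), hij⟩, Cc (lapLM k m i j y.1), hCdeg, rfl⟩
        · exact le_trans (totalDegree_r2_mul_le i j _) (by omega)
      rw [Bf_r2_mul] at h1
      exact h1
    have hCcH : Cc y.1 ∈ HarmSub k m := by
      rw [mem_HarmSub]
      intro i j hij
      rw [lapLM_Cc, hlap i j hij]
      simp [Cc]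
    have h2 : Bf (Cc y.1) y.1 = 0 :=
      hy' _ (Submodule.mem_sup_left hCcH) (le_trans (totalDegree_Cc_le _) hydeg)
    exact Subtype.ext (Bf_conj_self _ h2)


theorem harm_zero : IsSphericalHarmonic k m 0 := by
  intro i j hij
  simp [mixedLap]

theorem harm_add {a b : MvPolynomial (Fin k × Fin m) ℂ} (ha : IsSphericalHarmonic k m a)
    (hb : IsSphericalHarmonic k m b) : IsSphericalHarmonic k m (a + b) := by
  intro i j hij
  have h : mixedLap k m i j (a + b) = mixedLap k m i j a + mixedLap k m i j b := by
    simp [mixedLap, map_add, Finset.sum_add_distrib]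
  rw [h, ha i j hij, hb i j hij, add_zero]

theorem harm_smul (c : ℂ) {a : MvPolynomial (Fin k × Fin m) ℂ}
    (ha : IsSphericalHarmonic k m a) : IsSphericalHarmonic k m (c • a) := by
  intro i j hij
  have h : mixedLap k m i j (c • a) = c • mixedLap k m i j a := by
    simp [mixedLap, map_smul, Finset.smul_sum]
  rw [h, ha i j hij, smul_zero]

theorem harm_of_mem_HarmSub {H : MvPolynomial (Fin k × Fin m) ℂ} (h : H ∈ HarmSub k m) :
    IsSphericalHarmonic k m H := by
  rw [mem_HarmSub] at h
  intro i j hij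
  rw [← lapLM_apply]
  exact h i j hij


end FischerAux

/-- Lemma 1(ii): for all positive `k, m`, every polynomial is a finite sum
`P = Σ_n r^{2n} H_n` with each `H_n` a spherical harmonic (the sum need not be direct). -/
theorem fischer_existence (k m : ℕ) (hk : 0 < k) (hm : 0 < m)
    (P : MvPolynomial (Fin k × Fin m) ℂ) :
    ∃ H : ({p : Fin k × Fin k // p.1 ≤ p.2} → ℕ) →₀ MvPolynomial (Fin k × Fin m) ℂ,
      (∀ n, IsSphericalHarmonic k m (H n)) ∧
        P = H.sum fun n Hn => r2pow k m n * Hn := by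
  classical
  have hmem := FischerAux.mem_span_Sgen k m P.totalDegree P le_rfl
  induction hmem using Submodule.span_induction with
  | mem q hq =>
    obtain ⟨n, H, hH, rfl⟩ := hq
    refine ⟨Finsupp.single n H, ?_, ?_⟩
    · intro n'
      by_cases h : n = n'
      · subst h
        rw [Finsupp.single_eq_same]
        exact FischerAux.harm_of_mem_HarmSub hH
      · rw [Finsupp.single_eq_of_ne' h]
        exact FischerAux.harm_zero
    · rw [Finsupp.sum_single_index (by rw [mul_zero])]
  | zero =>
    refine ⟨0, fun n => ?_, ?_⟩
    · rw [Finsupp.coe_zero, Pi.zero_apply]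
      exact FischerAux.harm_zero
    · rw [Finsupp.sum_zero_index]
  | add x y hx hy ihx ihy =>
    obtain ⟨H1, hH1, rfl⟩ := ihx
    obtain ⟨H2, hH2, rfl⟩ := ihy
    refine ⟨H1 + H2, fun n => ?_, ?_⟩
    · rw [Finsupp.add_apply]
      exact FischerAux.harm_add (hH1 n) (hH2 n)
    · rw [Finsupp.sum_add_index' (fun n => mul_zero _) (fun n b1 b2 => mul_add _ _ _)]
  | smul c x hx ihx =>
    obtain ⟨H, hH, rfl⟩ := ihx
    refine ⟨c • H, fun n => ?_, ?_⟩
    · rw [Finsupp.smul_apply]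
      exact FischerAux.harm_smul c (hH n)
    · rw [Finsupp.smul_sum, Finsupp.sum_smul_index' (fun n => mul_zero _)]
      exact Finsupp.sum_congr fun n _ => (mul_smul_comm _ _ _).symm
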